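/- Assume D = 0 and T = 1, and define H(a) = −κ·∑_{k} a_k − (1/2)·∑_{k}∑_{j ~ k} a_j·a_k. Let a : [0,∞) → ℝ^L be a differentiable solution of a'(t) = f(a(t)) with a_i(0) ≥ 0 for all i. Then for every t ≥ 0, (d/dt) H(a(t)) = −(1/2)·∑_{k}∑_{j ~ k} q_{kj}(a(t))·q_{jk}(a(t))·( N_k(a(t)) − N_j(a(t)) )², and in particular (d/dt) H(a(t)) ≤ 0; that is, H is a Lyapunov function for the pure transport process. -/

import Mathlib

open Finset Filter

/-- `auxN G κ a i = κ + ∑_{j ~ i} a_j`. -/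
noncomputable def auxN {L : ℕ} (G : SimpleGraph (Fin L)) [DecidableRel G.Adj] (κ : ℝ)
    (a : Fin L → ℝ) (i : Fin L) : ℝ :=
  κ + ∑ j ∈ G.neighborFinset i, a j

/-- The auxin transport vector field
`f_i(a) = D·∑_{k ~ i}(a_k − a_i) + T·∑_{k ~ i}(a_k·a_i/N_k(a) − a_i·a_k/N_i(a))`. -/
noncomputable def auxF {L : ℕ} (G : SimpleGraph (Fin L)) [DecidableRel G.Adj] (κ D T : ℝ)
    (a : Fin L → ℝ) (i : Fin L) : ℝ :=
  D * ∑ k ∈ G.neighborFinset i, (a k - a i) +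
    T * ∑ k ∈ G.neighborFinset i,
      (a k * a i / auxN G κ a k - a i * a k / auxN G κ a i)

/-- The "relative flux" factor: `auxF G κ 0 1 a i = a i * auxG' G κ a i`. -/
noncomputable def auxG' {L : ℕ} (G : SimpleGraph (Fin L)) [DecidableRel G.Adj] (κ : ℝ)
    (a : Fin L → ℝ) (i : Fin L) : ℝ :=
  ∑ k ∈ G.neighborFinset i, (a k / auxN G κ a k - a k / auxN G κ a i)

lemma auxF_factor {L : ℕ} (G : SimpleGraph (Fin L)) [DecidableRel G.Adj] (κ : ℝ)
    (a : Fin L → ℝ) (i : Fin L) :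
    auxF G κ 0 1 a i = a i * auxG' G κ a i := by
  simp only [auxF, auxG', zero_mul, one_mul, zero_add, Finset.sum_const_zero]
  rw [Finset.mul_sum]
  exact Finset.sum_congr rfl fun k _ => by ring

/-- If `u' = u·h` with `h` bounded on `[σ, τ]` and `u σ ≥ 0`, then `u ≥ 0` on `[σ, τ]`. -/
lemma ode_sign_preserve {u h : ℝ → ℝ} {σ τ C : ℝ} (hστ : σ ≤ τ)
    (hu : ∀ s ∈ Set.Icc σ τ, HasDerivAt u (u s * h s) s)
    (hh : ∀ s ∈ Set.Icc σ τ, |h s| ≤ C)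
    (h0 : 0 ≤ u σ) : ∀ s ∈ Set.Icc σ τ, 0 ≤ u s := by
  by_contra hcon
  push_neg at hcon
  obtain ⟨t₁, ht₁, hneg⟩ := hcon
  have hC0 : 0 ≤ C := (abs_nonneg _).trans (hh σ ⟨le_rfl, hστ⟩)
  have hcont : ContinuousOn u (Set.Icc σ t₁) := fun s hs =>
    ((hu s ⟨hs.1, hs.2.trans ht₁.2⟩).continuousAt).continuousWithinAt
  obtain ⟨t₀, ht₀, hu0⟩ :=
    intermediate_value_Icc' ht₁.1 hcont ⟨le_of_lt hneg, h0⟩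
  set v : ℝ → ℝ → ℝ := fun s x => x * max (-C) (min C (h s)) with hv
  have hlip : ∀ s, LipschitzWith C.toNNReal (v s) := by
    intro s
    apply LipschitzWith.of_dist_le_mul
    intro x y
    have hcl : |max (-C) (min C (h s))| ≤ C :=
      abs_le.2 ⟨le_max_left _ _, max_le (neg_le_self hC0) (min_le_left _ _)⟩
    simp only [Real.dist_eq, hv]
    rw [Real.coe_toNNReal _ hC0, ← sub_mul, abs_mul, mul_comm]
    exact mul_le_mul_of_nonneg_right hcl (abs_nonneg _)
  have hmem : ∀ s ∈ Set.Ico t₀ t₁, s ∈ Set.Icc σ τ := fun s hs =>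
    ⟨ht₀.1.trans hs.1, (hs.2.le.trans ht₁.2)⟩
  have hveq : ∀ s ∈ Set.Ico t₀ t₁, v s (u s) = u s * h s := by
    intro s hs
    have hb := abs_le.1 (hh s (hmem s hs))
    simp only [hv]
    rw [min_eq_right hb.2, max_eq_right hb.1]
  have huniq := ODE_solution_unique (f := u) (g := fun _ => (0 : ℝ)) (v := v)
    (hlip)
    (hcont.mono (Set.Icc_subset_Icc_left ht₀.1))
    (fun s hs => by
      rw [hveq s hs]
      exact (hu s (hmem s hs)).hasDerivWithinAt)
    (continuousOn_const)
    (fun s hs => by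
      have : v s 0 = 0 := by simp [hv]
      rw [this]
      exact (hasDerivAt_const s (0:ℝ)).hasDerivWithinAt)
    (by simpa using hu0)
  have := huniq ⟨ht₀.2, le_rfl⟩
  simp only at this
  linarith [hneg, this]

/-- Nonnegativity is preserved along solutions of the pure transport system. -/
lemma auxin_nonneg {L : ℕ} (G : SimpleGraph (Fin L)) [DecidableRel G.Adj]
    (κ : ℝ) (hκ : 0 < κ) (a : ℝ → Fin L → ℝ)
    (hderiv : ∀ t, 0 ≤ t → HasDerivAt a (auxF G κ 0 1 (a t)) t)
    (hnonneg : ∀ i, 0 ≤ a 0 i) :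
    ∀ t, 0 ≤ t → ∀ i, 0 ≤ a t i := by
  have hcomp : ∀ t, 0 ≤ t → ∀ i, HasDerivAt (fun s => a s i) (auxF G κ 0 1 (a t) i) t :=
    fun t ht i => hasDerivAt_pi.1 (hderiv t ht) i
  have haC : ∀ t, 0 ≤ t → ∀ i, ContinuousAt (fun s => a s i) t :=
    fun t ht i => (hcomp t ht i).continuousAt
  have hNc : ∀ (j : Fin L), ∀ t, 0 ≤ t → ContinuousAt (fun s => auxN G κ (a s) j) t := by
    intro j t ht
    have h1 : Continuous (fun b : Fin L → ℝ => auxN G κ b j) := by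
      unfold auxN
      exact continuous_const.add (continuous_finset_sum _ fun i _ => continuous_apply i)
    exact h1.continuousAt.comp (hderiv t ht).continuousAt
  intro t₁ ht₁
  suffices hs : ∀ s ∈ Set.Icc 0 t₁, ∀ i, 0 ≤ a s i by
    exact hs t₁ ⟨ht₁, le_rfl⟩
  set S : Set ℝ := {t | t ∈ Set.Icc 0 t₁ ∧ ∀ s ∈ Set.Icc 0 t, ∀ i, 0 ≤ a s i} with hSdef
  have h0S : (0:ℝ) ∈ S := by
    refine ⟨⟨le_rfl, ht₁⟩, fun s hs i => ?_⟩
    have : s = 0 := le_antisymm hs.2 hs.1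
    rw [this]; exact hnonneg i
  have hbdd : BddAbove S := ⟨t₁, fun x hx => hx.1.2⟩
  set T := sSup S with hTdef
  have h0T : 0 ≤ T := le_csSup hbdd h0S
  have hTt₁ : T ≤ t₁ := csSup_le ⟨0, h0S⟩ fun x hx => hx.1.2
  have hTpos : ∀ s ∈ Set.Icc 0 T, ∀ i, 0 ≤ a s i := by
    intro s hs i
    rcases eq_or_lt_of_le hs.2 with heq | hlt
    · -- s = T
      rcases eq_or_lt_of_le hs.1 with h0s | h0s
    -- T = 0
      · rw [← h0s]; exact hnonneg i
      · -- 0 < s: take the limit from the left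
        have htd : Filter.Tendsto (fun r => a r i) (nhdsWithin s (Set.Iio s)) (nhds (a s i)) :=
          ((haC s hs.1 i).continuousWithinAt).tendsto
        refine ge_of_tendsto htd ?_
        filter_upwards [Ioo_mem_nhdsLT h0s] with r hr
        obtain ⟨x, hxS, hrx⟩ := exists_lt_of_lt_csSup ⟨0, h0S⟩ (heq ▸ hr.2)
        exact hxS.2 r ⟨hr.1.le, hrx.le⟩ i
    · obtain ⟨x, hxS, hsx⟩ := exists_lt_of_lt_csSup ⟨0, h0S⟩ hlt
      exact hxS.2 s ⟨hs.1, hsx.le⟩ i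
  have hTeq : T = t₁ := by
    by_contra hne
    have hTlt : T < t₁ := lt_of_le_of_ne hTt₁ hne
    have hNT : ∀ j, κ / 2 < auxN G κ (a T) j := by
      intro j
      have : κ ≤ auxN G κ (a T) j :=
        le_add_of_nonneg_right (Finset.sum_nonneg fun k _ => hTpos T ⟨h0T, le_rfl⟩ k)
      linarith
    have hU : ∀ᶠ s in nhds T, ∀ j, κ / 2 < auxN G κ (a s) j := by
      rw [Filter.eventually_all]
      intro j
      exact (hNc j T h0T).eventually (eventually_gt_nhds (hNT j))
    obtain ⟨ε, hε, hball⟩ := Metric.eventually_nhds_iff.1 hU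
    set δ : ℝ := min (ε / 2) (t₁ - T) with hδdef
    have hδpos : 0 < δ := lt_min (by linarith) (by linarith)
    have hIccpos : ∀ s ∈ Set.Icc T (T + δ), (0:ℝ) ≤ s := fun s hs => h0T.trans hs.1
    have hIccN : ∀ s ∈ Set.Icc T (T + δ), ∀ j, κ / 2 < auxN G κ (a s) j := by
      intro s hs j
      apply hball
      rw [Real.dist_eq, abs_of_nonneg (by linarith [hs.1])]
      have : s ≤ T + δ := hs.2
      have hδε : δ ≤ ε / 2 := min_le_left _ _
      linarith
    -- for each coordinate, nonnegativity extends to `[T, T+δ]`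
    have hext : ∀ i, ∀ s ∈ Set.Icc T (T + δ), 0 ≤ a s i := by
      intro i
      have hgc : ContinuousOn (fun s => auxG' G κ (a s) i) (Set.Icc T (T + δ)) := by
        intro s hs
        apply ContinuousAt.continuousWithinAt
        have hs0 : (0:ℝ) ≤ s := hIccpos s hs
        unfold auxG'
        apply tendsto_finset_sum
        intro k _
        apply Filter.Tendsto.sub
        · exact Filter.Tendsto.div (haC s hs0 k) (hNc k s hs0)
            (ne_of_gt ((by linarith : (0:ℝ) < κ/2).trans (hIccN s hs k)))
        · exact Filter.Tendsto.div (haC s hs0 k) (hNc i s hs0)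
            (ne_of_gt ((by linarith : (0:ℝ) < κ/2).trans (hIccN s hs i)))
      obtain ⟨C, hC⟩ := (isCompact_Icc).exists_bound_of_continuousOn hgc
      refine ode_sign_preserve (h := fun s => auxG' G κ (a s) i) (C := C) (by linarith) ?_ ?_ (hTpos T ⟨h0T, le_rfl⟩ i)
      · intro s hs
        have := hcomp s (hIccpos s hs) i
        rwa [auxF_factor] at this
      · intro s hs
        have := hC s hs
        rwa [Real.norm_eq_abs] at this
    have hTδS : T + δ ∈ S := by
      refine ⟨⟨by linarith, by have := min_le_right (ε/2) (t₁ - T); linarith⟩, ?_⟩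
      intro s hs i
      rcases le_total s T with h | h
      · exact hTpos s ⟨hs.1, h⟩ i
      · exact hext i s ⟨h, hs.2⟩
    have : T + δ ≤ T := le_csSup hbdd hTδS
    linarith
  intro s hs i
  exact hTpos s ⟨hs.1, hs.2.trans_eq hTeq.symm⟩ i

/-- The key algebraic identity for the derivative of the Lyapunov function. -/
lemma auxin_deriv_eq {L : ℕ} (G : SimpleGraph (Fin L)) [DecidableRel G.Adj]
    (κ : ℝ) (b : Fin L → ℝ) (hN : ∀ j, auxN G κ b j ≠ 0) :
    -κ * (∑ k, auxF G κ 0 1 b k) -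
      (1 / 2) * ∑ k, ∑ j ∈ G.neighborFinset k,
        (auxF G κ 0 1 b j * b k + b j * auxF G κ 0 1 b k) =
    -(1 / 2) * ∑ k, ∑ j ∈ G.neighborFinset k,
        (b j / auxN G κ b k) * (b k / auxN G κ b j) *
          (auxN G κ b k - auxN G κ b j) ^ 2 := by
  set N : Fin L → ℝ := auxN G κ b with hNdef
  set f : Fin L → ℝ := auxF G κ 0 1 b with hfdef
  have swap : ∀ F : Fin L → Fin L → ℝ,
      ∑ k, ∑ j ∈ G.neighborFinset k, F j k = ∑ k, ∑ j ∈ G.neighborFinset k, F k j := by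
    intro F
    exact Finset.sum_comm' (fun x y => by
      simp only [Finset.mem_univ, true_and, and_true, SimpleGraph.mem_neighborFinset]
      exact G.adj_comm _ _)
  have hfk : ∀ k, f k = ∑ j ∈ G.neighborFinset k, (b j * b k / N j - b k * b j / N k) := by
    intro k
    simp [hfdef, auxF, hNdef]
  have hNf : ∀ k, N k * f k = ∑ j ∈ G.neighborFinset k, (b j * b k * N k / N j - b j * b k) := by
    intro k
    rw [hfk k, Finset.mul_sum]
    refine Finset.sum_congr rfl fun j hj => ?_
    have hj' : N j ≠ 0 := hN j
    have hk' : N k ≠ 0 := hN k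
    field_simp
  have hswap1 : ∑ k, ∑ j ∈ G.neighborFinset k, f j * b k
      = ∑ k, ∑ j ∈ G.neighborFinset k, b j * f k := by
    rw [swap (fun x y => f x * b y)]
    exact Finset.sum_congr rfl fun k _ => Finset.sum_congr rfl fun j _ => mul_comm _ _
  have expand : ∑ k, N k * f k
      = κ * ∑ k, f k + ∑ k, ∑ j ∈ G.neighborFinset k, b j * f k := by
    rw [Finset.mul_sum, ← Finset.sum_add_distrib]
    refine Finset.sum_congr rfl fun k _ => ?_
    rw [hNdef]
    show auxN G κ b k * f k = _
    rw [auxN, ← Finset.sum_mul]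
    ring
  have step1 : -κ * (∑ k, f k) -
      (1 / 2) * ∑ k, ∑ j ∈ G.neighborFinset k, (f j * b k + b j * f k)
      = -∑ k, N k * f k := by
    simp only [Finset.sum_add_distrib]
    rw [hswap1, expand]
    ring
  have combine : (2:ℝ) * ∑ k, ∑ j ∈ G.neighborFinset k, (b j * b k * N k / N j - b j * b k)
      = ∑ k, ∑ j ∈ G.neighborFinset k, (b j / N k) * (b k / N j) * (N k - N j) ^ 2 := by
    rw [two_mul]
    nth_rewrite 2 [swap (fun x y => b x * b y * N y / N x - b x * b y)]
    rw [← Finset.sum_add_distrib]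
    refine Finset.sum_congr rfl fun k _ => ?_
    rw [← Finset.sum_add_distrib]
    refine Finset.sum_congr rfl fun j hj => ?_
    have hj' : N j ≠ 0 := hN j
    have hk' : N k ≠ 0 := hN k
    field_simp
    ring
  have e1 : ∑ k, N k * f k
      = ∑ k, ∑ j ∈ G.neighborFinset k, (b j * b k * N k / N j - b j * b k) :=
    Finset.sum_congr rfl fun k _ => hNf k
  rw [step1, e1]
  rw [← combine]
  ring

/-- For pure transport (`D = 0`, `T = 1`),
`H(a) = −κ·∑_k a_k − (1/2)·∑_k ∑_{j~k} a_j a_k` is a Lyapunov function: along any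
nonnegative solution, `(d/dt) H(a(t)) = −(1/2)·∑_k ∑_{j~k} q_{kj} q_{jk} (N_k − N_j)² ≤ 0`. -/
theorem auxin_lyapunov {L : ℕ} (hL : 1 ≤ L) (G : SimpleGraph (Fin L)) [DecidableRel G.Adj]
    (κ : ℝ) (hκ : 0 < κ)
    (a : ℝ → Fin L → ℝ)
    (hderiv : ∀ t, 0 ≤ t → HasDerivAt a (auxF G κ 0 1 (a t)) t)
    (hnonneg : ∀ i, 0 ≤ a 0 i) :
    ∀ t, 0 ≤ t →
      HasDerivAt
        (fun s => -κ * ∑ k, a s k -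
          (1 / 2) * ∑ k, ∑ j ∈ G.neighborFinset k, a s j * a s k)
        (-(1 / 2) * ∑ k, ∑ j ∈ G.neighborFinset k,
          (a t j / auxN G κ (a t) k) * (a t k / auxN G κ (a t) j) *
            (auxN G κ (a t) k - auxN G κ (a t) j) ^ 2) t ∧
      -(1 / 2) * ∑ k, ∑ j ∈ G.neighborFinset k,
          (a t j / auxN G κ (a t) k) * (a t k / auxN G κ (a t) j) *
            (auxN G κ (a t) k - auxN G κ (a t) j) ^ 2 ≤ 0 := by
  intro t ht
  have hpos : ∀ i, 0 ≤ a t i := auxin_nonneg G κ hκ a hderiv hnonneg t ht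
  have hNpos : ∀ j, 0 < auxN G κ (a t) j := fun j =>
    lt_of_lt_of_le hκ (le_add_of_nonneg_right (Finset.sum_nonneg fun k _ => hpos k))
  have hN : ∀ j, auxN G κ (a t) j ≠ 0 := fun j => ne_of_gt (hNpos j)
  have hd : ∀ i, HasDerivAt (fun s => a s i) (auxF G κ 0 1 (a t) i) t :=
    fun i => hasDerivAt_pi.1 (hderiv t ht) i
  have h1 : HasDerivAt (fun s => ∑ k, a s k) (∑ k, auxF G κ 0 1 (a t) k) t :=
    HasDerivAt.fun_sum fun k _ => hd k
  have h2 : HasDerivAt (fun s => ∑ k, ∑ j ∈ G.neighborFinset k, a s j * a s k)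
      (∑ k, ∑ j ∈ G.neighborFinset k,
        (auxF G κ 0 1 (a t) j * a t k + a t j * auxF G κ 0 1 (a t) k)) t :=
    HasDerivAt.fun_sum fun k _ => HasDerivAt.fun_sum fun j _ => (hd j).mul (hd k)
  have h3 := (h1.const_mul (-κ)).sub (h2.const_mul ((1:ℝ)/2))
  constructor
  · have heq := auxin_deriv_eq G κ (a t) hN
    exact heq ▸ h3
  · have hsum : 0 ≤ ∑ k, ∑ j ∈ G.neighborFinset k,
        (a t j / auxN G κ (a t) k) * (a t k / auxN G κ (a t) j) *
          (auxN G κ (a t) k - auxN G κ (a t) j) ^ 2 := by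
      refine Finset.sum_nonneg fun k _ => Finset.sum_nonneg fun j _ => ?_
      exact mul_nonneg
        (mul_nonneg (div_nonneg (hpos j) (hNpos k).le) (div_nonneg (hpos k) (hNpos j).le))
        (sq_nonneg _)
    linarith
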